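/- Let f be a multivariate real polynomial in n variables with deg f > 0, let h ∈ ℝ^n, and let g ∈ cone(h) be such that f − g is a sum of squares. Then deg g ≤ deg f. -/
import Mathlib

open MvPolynomial Finset

/-- `g ∈ cone(h)`: a conic combination of monomials with even exponents
shifted by `h` (the constant coefficient `b 0` may be arbitrary). -/
def MemCone {n : ℕ} (h : Fin n → ℝ) (g : MvPolynomial (Fin n) ℝ) : Prop :=
  ∃ (J : Finset (Fin n → ℕ)) (b : (Fin n → ℕ) → ℝ),
    (∀ α ∈ J, α ≠ 0 → 0 ≤ b α) ∧
    g = ∑ α ∈ J, MvPolynomial.C (b α) *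
      ∏ i, (MvPolynomial.X i - MvPolynomial.C (h i)) ^ (2 * α i)

/-- A polynomial is a sum of squares. -/
def IsSos {n : ℕ} (p : MvPolynomial (Fin n) ℝ) : Prop :=
  ∃ (k : ℕ) (u : Fin k → MvPolynomial (Fin n) ℝ), p = ∑ i, (u i) ^ 2

/-- The "restriction to the diagonal" algebra map. -/
noncomputable def diagMap (n : ℕ) : MvPolynomial (Fin n) ℝ →ₐ[ℝ] Polynomial ℝ :=
  MvPolynomial.aeval (fun _ => Polynomial.X)

lemma diagMap_eval {n : ℕ} (p : MvPolynomial (Fin n) ℝ) (t : ℝ) :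
    Polynomial.eval t (diagMap n p) = MvPolynomial.eval (fun _ => t) p := by
  induction p using MvPolynomial.induction_on with
  | C a => simp [diagMap]
  | add p q hp hq => rw [map_add, Polynomial.eval_add, hp, hq, map_add]
  | mul_X p i hp =>
    rw [map_mul, Polynomial.eval_mul, hp]
    simp [diagMap]

lemma diagMap_natDegree_le {n : ℕ} (p : MvPolynomial (Fin n) ℝ) :
    (diagMap n p).natDegree ≤ p.totalDegree := by
  conv_lhs => rw [p.as_sum]
  rw [map_sum]
  apply Polynomial.natDegree_sum_le_of_forall_le
  intro m hm
  rw [diagMap, MvPolynomial.aeval_monomial]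
  refine le_trans (Polynomial.natDegree_mul_le) ?_
  have h1 : (algebraMap ℝ (Polynomial ℝ) (MvPolynomial.coeff m p)).natDegree = 0 := by
    simp [Polynomial.natDegree_C]
  rw [h1, zero_add]
  refine le_trans ?_ (MvPolynomial.le_totalDegree hm)
  rw [Finsupp.prod, Finsupp.sum]
  refine le_trans (Polynomial.natDegree_prod_le _ _) ?_
  apply Finset.sum_le_sum
  intro i _
  simp [Polynomial.natDegree_pow]

theorem degree_bound_for_global_underestimators
    {n : ℕ} (f g : MvPolynomial (Fin n) ℝ) (h : Fin n → ℝ)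
    (hf : 0 < f.totalDegree) (hgc : MemCone h g)
    (hsos : IsSos (f - g)) :
    g.totalDegree ≤ f.totalDegree := by
  by_contra hcon
  rw [not_le] at hcon
  obtain ⟨J, b, hb, hg⟩ := hgc
  obtain ⟨k, u, hu⟩ := hsos
  -- restrict to the support of b
  set J' : Finset (Fin n → ℕ) := J.filter (fun α => b α ≠ 0) with hJ'def
  have hgsum : g = ∑ α ∈ J', MvPolynomial.C (b α) *
      ∏ i, (MvPolynomial.X i - MvPolynomial.C (h i)) ^ (2 * α i) := by
    rw [hg]
    refine (Finset.sum_filter_of_ne ?_).symm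
    intro α _ hne
    by_contra hb0
    simp [hb0] at hne
  -- degree bound for g
  have hdeg : g.totalDegree ≤ J'.sup (fun α => ∑ i, 2 * α i) := by
    rw [hgsum]
    refine le_trans (MvPolynomial.totalDegree_finset_sum _ _) (Finset.sup_le ?_)
    intro α hα
    refine le_trans ?_ (Finset.le_sup hα)
    refine le_trans (MvPolynomial.totalDegree_mul _ _) ?_
    rw [MvPolynomial.totalDegree_C, zero_add]
    refine le_trans (MvPolynomial.totalDegree_finset_prod _ _) ?_
    apply Finset.sum_le_sum
    intro i _
    refine le_trans (MvPolynomial.totalDegree_pow _ _) ?_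
    have : (MvPolynomial.X i - MvPolynomial.C (h i) :
        MvPolynomial (Fin n) ℝ).totalDegree ≤ 1 := by
      rw [sub_eq_add_neg]
      refine le_trans (MvPolynomial.totalDegree_add _ _) ?_
      simp [MvPolynomial.totalDegree_X, MvPolynomial.totalDegree_neg]
    calc 2 * α i * (MvPolynomial.X i - MvPolynomial.C (h i) :
          MvPolynomial (Fin n) ℝ).totalDegree ≤ 2 * α i * 1 :=
        Nat.mul_le_mul_left _ this
      _ = 2 * α i := by ring
  have hJ'ne : J'.Nonempty := by
    rcases Finset.eq_empty_or_nonempty J' with he | hne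
    · exfalso
      rw [he] at hgsum
      simp only [Finset.sum_empty] at hgsum
      rw [hgsum, MvPolynomial.totalDegree_zero] at hcon
      exact Nat.not_lt_zero _ hcon
    · exact hne
  obtain ⟨αs, hαsJ', hMs⟩ := Finset.exists_mem_eq_sup J' hJ'ne (fun α => ∑ i, 2 * α i)
  obtain ⟨M, hMdef⟩ : ∃ M : ℕ, M = ∑ i, 2 * αs i := ⟨_, rfl⟩
  rw [← hMdef] at hMs
  have hMg : g.totalDegree ≤ M := hdeg.trans (le_of_eq hMs)
  have hfM : f.totalDegree < M := lt_of_lt_of_le hcon hMg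
  have hαsJ : αs ∈ J := (Finset.mem_filter.mp hαsJ').1
  have hαsne : αs ≠ 0 := by
    intro h0
    rw [h0] at hMdef
    simp only [Pi.zero_apply, Nat.mul_zero, Finset.sum_const_zero] at hMdef
    rw [hMdef] at hfM
    exact Nat.not_lt_zero _ hfM
  have hbpos : 0 < b αs :=
    lt_of_le_of_ne (hb αs hαsJ hαsne) (Ne.symm (Finset.mem_filter.mp hαsJ').2)
  -- one-variable polynomials
  set P : Polynomial ℝ := ∏ i, (Polynomial.X - Polynomial.C (h i)) ^ (2 * αs i) with hPdef
  have hPmonic : P.Monic :=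
    Polynomial.monic_prod_of_monic _ _ fun i _ => (Polynomial.monic_X_sub_C _).pow _
  have hPdeg : P.natDegree = M := by
    rw [hPdef, Polynomial.natDegree_prod _ _
      (fun i _ => pow_ne_zero _ (Polynomial.X_sub_C_ne_zero _)), hMdef]
    simp [Polynomial.natDegree_pow, Polynomial.natDegree_X_sub_C]
  set c0 : ℝ := if (0 : Fin n → ℕ) ∈ J then b 0 else 0 with hc0def
  -- key pointwise lower bound
  have hkey : ∀ t : ℝ, c0 + b αs * Polynomial.eval t P ≤
      MvPolynomial.eval (fun _ => t) g := by
    intro t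
    set E : (Fin n → ℕ) → ℝ := fun α => b α * ∏ i, (t - h i) ^ (2 * α i) with hEdef
    have hEnn : ∀ α ∈ J, α ≠ 0 → 0 ≤ E α := by
      intro α hα h0
      refine mul_nonneg (hb α hα h0) (Finset.prod_nonneg ?_)
      intro i _
      rw [mul_comm, pow_mul]
      exact sq_nonneg _
    have hevalg : MvPolynomial.eval (fun _ => t) g = ∑ α ∈ J, E α := by
      rw [hg, map_sum]
      apply Finset.sum_congr rfl
      intro α _
      simp [hEdef]
    have hEαs : E αs = b αs * Polynomial.eval t P := by
      simp [hEdef, hPdef, Polynomial.eval_prod]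
    rw [hevalg, ← Finset.add_sum_erase J E hαsJ, hEαs, add_comm]
    gcongr
    by_cases h0J : (0 : Fin n → ℕ) ∈ J
    · have h0e : (0 : Fin n → ℕ) ∈ J.erase αs :=
        Finset.mem_erase.mpr ⟨Ne.symm hαsne, h0J⟩
      rw [← Finset.add_sum_erase _ E h0e]
      have hE0 : E 0 = b 0 := by simp [hEdef]
      have : (0:ℝ) ≤ ∑ α ∈ (J.erase αs).erase 0, E α := by
        apply Finset.sum_nonneg
        intro α hα
        have hα0 : α ≠ 0 := (Finset.mem_erase.mp hα).1
        have hαJ : α ∈ J := Finset.mem_of_mem_erase (Finset.mem_of_mem_erase hα)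
        exact hEnn α hαJ hα0
      rw [hc0def, if_pos h0J, hE0]
      linarith
    · rw [hc0def, if_neg h0J]
      apply Finset.sum_nonneg
      intro α hα
      have hαJ : α ∈ J := Finset.mem_of_mem_erase hα
      have hα0 : α ≠ 0 := by rintro rfl; exact h0J hαJ
      exact hEnn α hαJ hα0
  -- f - g is nonnegative on the diagonal
  have hfg : ∀ t : ℝ, 0 ≤ MvPolynomial.eval (fun _ => t) (f - g) := by
    intro t
    rw [hu, map_sum]
    apply Finset.sum_nonneg
    intro i _
    rw [map_pow]
    exact sq_nonneg _
  -- the contradiction polynomial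
  set F : Polynomial ℝ := diagMap n f with hFdef
  set D : Polynomial ℝ := (F - Polynomial.C c0) - Polynomial.C (b αs) * P with hDdef
  have hDnn : ∀ t : ℝ, 0 ≤ Polynomial.eval t D := by
    intro t
    have h1 := hkey t
    have h2 := hfg t
    rw [map_sub] at h2
    have h3 : Polynomial.eval t F = MvPolynomial.eval (fun _ => t) f := diagMap_eval f t
    simp only [hDdef, Polynomial.eval_sub, Polynomial.eval_mul, Polynomial.eval_C, h3]
    linarith
  -- degree computations
  have hFdeg : (F - Polynomial.C c0).natDegree < M := by
    have h1 : F.natDegree ≤ f.totalDegree := diagMap_natDegree_le f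
    have h2 : (F - Polynomial.C c0).natDegree ≤ max F.natDegree (Polynomial.C c0).natDegree :=
      Polynomial.natDegree_sub_le _ _
    have h3 : (Polynomial.C c0 : Polynomial ℝ).natDegree = 0 := Polynomial.natDegree_C _
    rw [h3] at h2
    have h4 : (F - Polynomial.C c0).natDegree ≤ F.natDegree := le_trans h2 (by simp)
    exact lt_of_le_of_lt (h4.trans h1) hfM
  have hBdeg : (Polynomial.C (b αs) * P).natDegree = M := by
    rw [Polynomial.natDegree_C_mul (ne_of_gt hbpos), hPdeg]
  have hDdeg : D.natDegree = M := by
    rw [hDdef, Polynomial.natDegree_sub_eq_right_of_natDegree_lt (by rw [hBdeg]; exact hFdeg)]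
    exact hBdeg
  have hDcoeff : D.coeff M = -(b αs) := by
    have h1 : (F - Polynomial.C c0).coeff M = 0 :=
      Polynomial.coeff_eq_zero_of_natDegree_lt hFdeg
    have h2 : P.coeff M = 1 := by rw [← hPdeg]; exact hPmonic.coeff_natDegree
    rw [hDdef, Polynomial.coeff_sub, h1, Polynomial.coeff_C_mul, h2]
    ring
  have hDlead : D.leadingCoeff = -(b αs) := by
    rw [Polynomial.leadingCoeff, hDdeg, hDcoeff]
  have hDne : D ≠ 0 := by
    intro h0
    rw [h0] at hDcoeff
    simp at hDcoeff
    linarith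
  have hDdegpos : 0 < D.degree := by
    apply Polynomial.natDegree_pos_iff_degree_pos.mp
    rw [hDdeg]
    exact lt_trans hf hfM
  have htend := Polynomial.tendsto_atBot_of_leadingCoeff_nonpos D hDdegpos
    (by rw [hDlead]; linarith)
  obtain ⟨t, ht⟩ := (htend.eventually (Filter.eventually_lt_atBot (0:ℝ))).exists
  linarith [hDnn t]
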